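/- For all natural numbers m ≥ 1, the double sum over r from 0 to m and s from 0 to m of ( binom(m,r)·binom(m,s)/binom(2m, r+s) )^2 equals binom(4m+1, 2m) / binom(2m, m)^2, with quotients taken in the rationals (or reals). -/

import Mathlib

open Finset

/-- `Hs d n p = ∑_{k≤n} ∑_{i≤p} C(k,i)² C(n-k,p-i) C(n-k,p+d-i)`:
pairs of lattice-path pieces through a marked point, endpoints `2d` apart. -/
def Hs (d n p : ℕ) : ℕ :=
  ∑ k ∈ range (n+1), ∑ i ∈ range (p+1),
    (k.choose i)^2 * ((n-k).choose (p-i) * (n-k).choose (p+d-i))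

/-- Closed form: `Ts d n p = ∑_{j≤p} C(n+1,j) C(n+1,2p+d+1-j)`. -/
def Ts (d n p : ℕ) : ℕ :=
  ∑ j ∈ range (p+1), (n+1).choose j * (n+1).choose (2*p+d+1-j)

lemma Hs_zero (d m : ℕ) : Hs d m 0 = ∑ k ∈ range (m+1), (m-k).choose d := by
  simp [Hs, Finset.sum_range_one]

lemma HsL4 (n : ℕ) : Hs 0 (n+1) 0 = Hs 0 n 0 + 1 := by
  simp [Hs_zero, Finset.sum_range_succ]

lemma HsL2 (d n : ℕ) : Hs (d+1) (n+1) 0 = Hs d n 0 + Hs (d+1) n 0 := by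
  rw [Hs_zero, Hs_zero, Hs_zero, Finset.sum_range_succ]
  have key : ∀ k ∈ range (n+1), (n+1-k).choose (d+1) = (n-k).choose d + (n-k).choose (d+1) := by
    intro k hk
    have hk' : k ≤ n := by simpa [Nat.lt_succ_iff] using hk
    rw [show n+1-k = (n-k)+1 by omega, Nat.choose_succ_succ]
  rw [Finset.sum_congr rfl key, Finset.sum_add_distrib]
  simp

lemma HsL1 (d n p : ℕ) :
    Hs (d+1) (n+1) (p+1)
      = Hs (d+1) n (p+1) + Hs d n (p+1) + Hs (d+2) n p + Hs (d+1) n p := by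
  unfold Hs
  rw [Finset.sum_range_succ]
  have hb : (∑ i ∈ range (p+1+1), ((n+1).choose i)^2 *
      ((n+1-(n+1)).choose (p+1-i) * (n+1-(n+1)).choose (p+1+(d+1)-i))) = 0 := by
    apply Finset.sum_eq_zero
    intro i hi
    have hi' : i ≤ p+1 := by simpa [Nat.lt_succ_iff] using hi
    rw [Nat.sub_self]
    rcases Nat.lt_or_ge i (p+1) with h | h
    · rw [Nat.choose_eq_zero_of_lt (show 0 < p+1-i by omega)]
      ring
    · rw [Nat.choose_eq_zero_of_lt (show 0 < p+1+(d+1)-i by omega)]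
      ring
  rw [hb, add_zero]
  have hmain : ∀ k ∈ range (n+1),
      (∑ i ∈ range (p+1+1), (k.choose i)^2 *
        ((n+1-k).choose (p+1-i) * (n+1-k).choose (p+1+(d+1)-i)))
      = (∑ i ∈ range (p+1+1), (k.choose i)^2 *
          ((n-k).choose (p+1-i) * (n-k).choose (p+1+(d+1)-i)))
      + (∑ i ∈ range (p+1+1), (k.choose i)^2 *
          ((n-k).choose (p+1-i) * (n-k).choose (p+1+d-i)))
      + ((∑ i ∈ range (p+1), (k.choose i)^2 *
          ((n-k).choose (p-i) * (n-k).choose (p+(d+2)-i)))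
      + (∑ i ∈ range (p+1), (k.choose i)^2 *
          ((n-k).choose (p-i) * (n-k).choose (p+(d+1)-i)))) := by
    intro k hk
    have hk' : k ≤ n := by simpa [Nat.lt_succ_iff] using hk
    rw [show n+1-k = (n-k)+1 by omega]
    set s := n - k with hs
    have key : ∀ i ∈ range (p+1),
        (k.choose i)^2 * ((s+1).choose (p+1-i) * (s+1).choose (p+1+(d+1)-i))
        = ((k.choose i)^2 * (s.choose (p+1-i) * s.choose (p+1+(d+1)-i))
          + (k.choose i)^2 * (s.choose (p+1-i) * s.choose (p+1+d-i)))
        + ((k.choose i)^2 * (s.choose (p-i) * s.choose (p+(d+2)-i))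
          + (k.choose i)^2 * (s.choose (p-i) * s.choose (p+(d+1)-i))) := by
      intro i hi
      have hip : i ≤ p := by simpa [Nat.lt_succ_iff] using hi
      rw [show p+1-i = (p-i)+1 by omega,
          show p+1+(d+1)-i = ((p-i)+d+1)+1 by omega,
          show p+1+d-i = (p-i)+d+1 by omega,
          show p+(d+2)-i = ((p-i)+d+1)+1 by omega,
          show p+(d+1)-i = (p-i)+d+1 by omega,
          Nat.choose_succ_succ s (p-i), Nat.choose_succ_succ s ((p-i)+d+1)]
      ring
    have hsplit : (∑ i ∈ range (p+1),
        (k.choose i)^2 * ((s+1).choose (p+1-i) * (s+1).choose (p+1+(d+1)-i)))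
        = ((∑ i ∈ range (p+1), (k.choose i)^2 * (s.choose (p+1-i) * s.choose (p+1+(d+1)-i)))
          + (∑ i ∈ range (p+1), (k.choose i)^2 * (s.choose (p+1-i) * s.choose (p+1+d-i))))
        + ((∑ i ∈ range (p+1), (k.choose i)^2 * (s.choose (p-i) * s.choose (p+(d+2)-i)))
          + (∑ i ∈ range (p+1), (k.choose i)^2 * (s.choose (p-i) * s.choose (p+(d+1)-i)))) := by
      rw [Finset.sum_congr rfl key]
      simp only [Finset.sum_add_distrib]
    have hL := Finset.sum_range_succ
      (fun i => (k.choose i)^2 * ((s+1).choose (p+1-i) * (s+1).choose (p+1+(d+1)-i))) (p+1)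
    have h1 := Finset.sum_range_succ
      (fun i => (k.choose i)^2 * (s.choose (p+1-i) * s.choose (p+1+(d+1)-i))) (p+1)
    have h2 := Finset.sum_range_succ
      (fun i => (k.choose i)^2 * (s.choose (p+1-i) * s.choose (p+1+d-i))) (p+1)
    have hbd : (k.choose (p+1))^2 * ((s+1).choose (p+1-(p+1)) * (s+1).choose (p+1+(d+1)-(p+1)))
        = (k.choose (p+1))^2 * (s.choose (p+1-(p+1)) * s.choose (p+1+(d+1)-(p+1)))
          + (k.choose (p+1))^2 * (s.choose (p+1-(p+1)) * s.choose (p+1+d-(p+1))) := by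
      rw [show p+1-(p+1) = 0 by omega, show p+1+(d+1)-(p+1) = d+1 by omega,
          show p+1+d-(p+1) = d by omega, Nat.choose_succ_succ s d]
      simp
      ring
    omega
  rw [Finset.sum_congr rfl hmain]
  simp only [Finset.sum_add_distrib]
  omega

lemma HsL3 (n p : ℕ) :
    Hs 0 (n+1) (p+1)
      = Hs 0 n (p+1) + Hs 0 n p + 2 * Hs 1 n p + ((n+1).choose (p+1))^2 := by
  unfold Hs
  rw [Finset.sum_range_succ]
  have hb : (∑ i ∈ range (p+1+1), ((n+1).choose i)^2 *
      ((n+1-(n+1)).choose (p+1-i) * (n+1-(n+1)).choose (p+1+0-i))) = ((n+1).choose (p+1))^2 := by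
    rw [Finset.sum_range_succ]
    have hz : (∑ i ∈ range (p+1), ((n+1).choose i)^2 *
        ((n+1-(n+1)).choose (p+1-i) * (n+1-(n+1)).choose (p+1+0-i))) = 0 := by
      apply Finset.sum_eq_zero
      intro i hi
      have hi' : i ≤ p := by simpa [Nat.lt_succ_iff] using hi
      rw [Nat.sub_self, Nat.choose_eq_zero_of_lt (show 0 < p+1-i by omega)]
      ring
    rw [hz]
    simp [show p+1-(p+1) = 0 from by omega, show p+1+0-(p+1) = 0 from by omega]
  rw [hb]
  have hmain : ∀ k ∈ range (n+1),
      (∑ i ∈ range (p+1+1), (k.choose i)^2 *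
        ((n+1-k).choose (p+1-i) * (n+1-k).choose (p+1+0-i)))
      = (∑ i ∈ range (p+1+1), (k.choose i)^2 *
          ((n-k).choose (p+1-i) * (n-k).choose (p+1+0-i)))
      + (∑ i ∈ range (p+1), (k.choose i)^2 *
          ((n-k).choose (p-i) * (n-k).choose (p+0-i)))
      + 2 * (∑ i ∈ range (p+1), (k.choose i)^2 *
          ((n-k).choose (p-i) * (n-k).choose (p+1-i))) := by
    intro k hk
    have hk' : k ≤ n := by simpa [Nat.lt_succ_iff] using hk
    rw [show n+1-k = (n-k)+1 by omega]
    set s := n - k with hs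
    have key : ∀ i ∈ range (p+1),
        (k.choose i)^2 * ((s+1).choose (p+1-i) * (s+1).choose (p+1+0-i))
        = (k.choose i)^2 * (s.choose (p+1-i) * s.choose (p+1+0-i))
        + (k.choose i)^2 * (s.choose (p-i) * s.choose (p+0-i))
        + 2 * ((k.choose i)^2 * (s.choose (p-i) * s.choose (p+1-i))) := by
      intro i hi
      have hip : i ≤ p := by simpa [Nat.lt_succ_iff] using hi
      rw [show p+1+0-i = p+1-i by omega, show p+0-i = p-i by omega,
          show p+1-i = (p-i)+1 by omega, Nat.choose_succ_succ s (p-i)]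
      ring
    have hsplit : (∑ i ∈ range (p+1),
        (k.choose i)^2 * ((s+1).choose (p+1-i) * (s+1).choose (p+1+0-i)))
        = (∑ i ∈ range (p+1), (k.choose i)^2 * (s.choose (p+1-i) * s.choose (p+1+0-i)))
        + (∑ i ∈ range (p+1), (k.choose i)^2 * (s.choose (p-i) * s.choose (p+0-i)))
        + (∑ i ∈ range (p+1), 2 * ((k.choose i)^2 * (s.choose (p-i) * s.choose (p+1-i)))) := by
      rw [Finset.sum_congr rfl key]
      simp only [Finset.sum_add_distrib]
    have hL := Finset.sum_range_succ
      (fun i => (k.choose i)^2 * ((s+1).choose (p+1-i) * (s+1).choose (p+1+0-i))) (p+1)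
    have h1 := Finset.sum_range_succ
      (fun i => (k.choose i)^2 * (s.choose (p+1-i) * s.choose (p+1+0-i))) (p+1)
    have hbd : (k.choose (p+1))^2 * ((s+1).choose (p+1-(p+1)) * (s+1).choose (p+1+0-(p+1)))
        = (k.choose (p+1))^2 * (s.choose (p+1-(p+1)) * s.choose (p+1+0-(p+1))) := by
      simp [show p+1-(p+1) = 0 from by omega, show p+1+0-(p+1) = 0 from by omega]
    have hmul : (∑ i ∈ range (p+1), 2 * ((k.choose i)^2 * (s.choose (p-i) * s.choose (p+1-i))))
        = 2 * ∑ i ∈ range (p+1), (k.choose i)^2 * (s.choose (p-i) * s.choose (p+1-i)) :=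
      (Finset.mul_sum _ _ _).symm
    omega
  rw [Finset.sum_congr rfl hmain]
  simp only [Finset.sum_add_distrib]
  rw [← Finset.mul_sum]

lemma TsL4 (n : ℕ) : Ts 0 (n+1) 0 = Ts 0 n 0 + 1 := by
  simp [Ts, Nat.choose_one_right]

lemma TsL2 (d n : ℕ) : Ts (d+1) (n+1) 0 = Ts d n 0 + Ts (d+1) n 0 := by
  unfold Ts
  rw [Finset.sum_range_one, Finset.sum_range_one, Finset.sum_range_one]
  rw [show 2*0+(d+1)+1-0 = (d+1)+1 by omega, show 2*0+d+1-0 = d+1 by omega,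
      Nat.choose_succ_succ' (n+1) (d+1)]
  simp [mul_add]

lemma TsL1 (d n p : ℕ) :
    Ts (d+1) (n+1) (p+1)
      = Ts (d+1) n (p+1) + Ts d n (p+1) + Ts (d+2) n p + Ts (d+1) n p := by
  unfold Ts
  have hL := Finset.sum_range_succ'
    (fun j => (n+1+1).choose j * (n+1+1).choose (2*(p+1)+(d+1)+1-j)) (p+1)
  have hA := Finset.sum_range_succ'
    (fun j => (n+1).choose j * (n+1).choose (2*(p+1)+d+1-j)) (p+1)
  have hB := Finset.sum_range_succ'
    (fun j => (n+1).choose j * (n+1).choose (2*(p+1)+(d+1)+1-j)) (p+1)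
  have key : ∀ j ∈ range (p+1),
      (n+1+1).choose (j+1) * (n+1+1).choose (2*(p+1)+(d+1)+1-(j+1))
      = ((n+1).choose j * (n+1).choose (2*p+(d+1)+1-j)
        + (n+1).choose j * (n+1).choose (2*p+(d+2)+1-j))
      + ((n+1).choose (j+1) * (n+1).choose (2*(p+1)+d+1-(j+1))
        + (n+1).choose (j+1) * (n+1).choose (2*(p+1)+(d+1)+1-(j+1))) := by
    intro j hj
    have hjp : j ≤ p := by simpa [Nat.lt_succ_iff] using hj
    rw [show 2*(p+1)+(d+1)+1-(j+1) = (2*p+(d+1)+1-j)+1 by omega,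
        Nat.choose_succ_succ' (n+1) j, Nat.choose_succ_succ' (n+1) (2*p+(d+1)+1-j),
        show (2*p+(d+1)+1-j)+1 = 2*p+(d+2)+1-j by omega,
        show 2*(p+1)+d+1-(j+1) = 2*p+(d+1)+1-j by omega]
    ring
  have hsplit : (∑ j ∈ range (p+1),
      (n+1+1).choose (j+1) * (n+1+1).choose (2*(p+1)+(d+1)+1-(j+1)))
      = ((∑ j ∈ range (p+1), (n+1).choose j * (n+1).choose (2*p+(d+1)+1-j))
        + (∑ j ∈ range (p+1), (n+1).choose j * (n+1).choose (2*p+(d+2)+1-j)))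
      + ((∑ j ∈ range (p+1), (n+1).choose (j+1) * (n+1).choose (2*(p+1)+d+1-(j+1)))
        + (∑ j ∈ range (p+1), (n+1).choose (j+1) * (n+1).choose (2*(p+1)+(d+1)+1-(j+1)))) := by
    rw [Finset.sum_congr rfl key]
    simp only [Finset.sum_add_distrib]
  have hbd : (n+1+1).choose 0 * (n+1+1).choose (2*(p+1)+(d+1)+1-0)
      = ((n+1).choose 0 * (n+1).choose (2*(p+1)+d+1-0))
        + ((n+1).choose 0 * (n+1).choose (2*(p+1)+(d+1)+1-0)) := by
    rw [show 2*(p+1)+(d+1)+1-0 = (2*(p+1)+d+1-0)+1 by omega,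
        Nat.choose_succ_succ' (n+1) (2*(p+1)+d+1-0)]
    simp [mul_add]
  omega

lemma TsL3 (n p : ℕ) :
    Ts 0 (n+1) (p+1)
      = Ts 0 n (p+1) + Ts 0 n p + 2 * Ts 1 n p + ((n+1).choose (p+1))^2 := by
  unfold Ts
  have hL := Finset.sum_range_succ'
    (fun j => (n+1+1).choose j * (n+1+1).choose (2*(p+1)+0+1-j)) (p+1)
  have hA := Finset.sum_range_succ'
    (fun j => (n+1).choose j * (n+1).choose (2*(p+1)+0+1-j)) (p+1)
  have hU' := Finset.sum_range_succ'
    (fun j => (n+1).choose j * (n+1).choose (2*p+1+1-j)) (p+1)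
  have hU := Finset.sum_range_succ
    (fun j => (n+1).choose j * (n+1).choose (2*p+1+1-j)) (p+1)
  have hsq : (n+1).choose (p+1) * (n+1).choose (2*p+1+1-(p+1)) = ((n+1).choose (p+1))^2 := by
    rw [show 2*p+1+1-(p+1) = p+1 by omega]
    ring
  have key : ∀ j ∈ range (p+1),
      (n+1+1).choose (j+1) * (n+1+1).choose (2*(p+1)+0+1-(j+1))
      = ((n+1).choose j * (n+1).choose (2*p+0+1-j)
        + (n+1).choose j * (n+1).choose (2*p+1+1-j))
      + ((n+1).choose (j+1) * (n+1).choose (2*p+1+1-(j+1))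
        + (n+1).choose (j+1) * (n+1).choose (2*(p+1)+0+1-(j+1))) := by
    intro j hj
    have hjp : j ≤ p := by simpa [Nat.lt_succ_iff] using hj
    rw [show 2*(p+1)+0+1-(j+1) = (2*p+0+1-j)+1 by omega,
        Nat.choose_succ_succ' (n+1) j, Nat.choose_succ_succ' (n+1) (2*p+0+1-j),
        show (2*p+0+1-j)+1 = 2*p+1+1-j by omega,
        show 2*p+1+1-(j+1) = 2*p+0+1-j by omega]
    ring
  have hsplit : (∑ j ∈ range (p+1),
      (n+1+1).choose (j+1) * (n+1+1).choose (2*(p+1)+0+1-(j+1)))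
      = ((∑ j ∈ range (p+1), (n+1).choose j * (n+1).choose (2*p+0+1-j))
        + (∑ j ∈ range (p+1), (n+1).choose j * (n+1).choose (2*p+1+1-j)))
      + ((∑ j ∈ range (p+1), (n+1).choose (j+1) * (n+1).choose (2*p+1+1-(j+1)))
        + (∑ j ∈ range (p+1), (n+1).choose (j+1) * (n+1).choose (2*(p+1)+0+1-(j+1)))) := by
    rw [Finset.sum_congr rfl key]
    simp only [Finset.sum_add_distrib]
  have hbd : (n+1+1).choose 0 * (n+1+1).choose (2*(p+1)+0+1-0)
      = ((n+1).choose 0 * (n+1).choose (2*p+1+1-0))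
        + ((n+1).choose 0 * (n+1).choose (2*(p+1)+0+1-0)) := by
    rw [show 2*(p+1)+0+1-0 = (2*p+1+1-0)+1 by omega,
        Nat.choose_succ_succ' (n+1) (2*p+1+1-0)]
    simp [mul_add]
  omega

lemma Hs_base (d p : ℕ) : Hs d 0 p = Ts d 0 p := by
  unfold Hs Ts
  rw [Finset.sum_range_one]
  cases p with
  | zero =>
    rw [Finset.sum_range_one, Finset.sum_range_one]
    cases d with
    | zero => simp
    | succ d =>
      rw [show 0+(d+1)-0 = d+1 by omega, show 2*0+(d+1)+1-0 = d+2 by omega,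
          Nat.choose_eq_zero_of_lt (show 0 < d+1 by omega),
          Nat.choose_eq_zero_of_lt (show 1 < d+2 by omega)]
      simp
  | succ p =>
    have hz1 : ∑ i ∈ range (p+1+1),
        ((0:ℕ).choose i)^2 * ((0-0).choose (p+1-i) * (0-0).choose (p+1+d-i)) = 0 := by
      apply Finset.sum_eq_zero
      intro i hi
      have hi' : i ≤ p+1 := by simpa [Nat.lt_succ_iff] using hi
      cases i with
      | zero =>
        rw [show (0:ℕ)-0 = 0 by omega, Nat.choose_eq_zero_of_lt (show 0 < p+1-0 by omega)]
        ring
      | succ i =>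
        rw [Nat.choose_eq_zero_of_lt (show 0 < i+1 by omega)]
        ring
    have hz2 : ∑ j ∈ range (p+1+1),
        (0+1).choose j * (0+1).choose (2*(p+1)+d+1-j) = 0 := by
      apply Finset.sum_eq_zero
      intro j hj
      have hj' : j ≤ p+1 := by simpa [Nat.lt_succ_iff] using hj
      rw [Nat.choose_eq_zero_of_lt (show 0+1 < 2*(p+1)+d+1-j by omega)]
      ring
    rw [hz1, hz2]

lemma Hs_eq_Ts : ∀ n d p, Hs d n p = Ts d n p := by
  intro n
  induction n with
  | zero => intro d p; exact Hs_base d p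
  | succ n ih =>
    intro d p
    match d, p with
    | 0, 0 => rw [HsL4, TsL4, ih 0 0]
    | 0, p+1 => rw [HsL3, TsL3, ih 0 (p+1), ih 0 p, ih 1 p]
    | d+1, 0 => rw [HsL2, TsL2, ih d 0, ih (d+1) 0]
    | d+1, p+1 => rw [HsL1, TsL1, ih (d+1) (p+1), ih d (p+1), ih (d+2) p, ih (d+1) p]

lemma HsEval (m : ℕ) : Hs 0 (2*m) m
    = ∑ r ∈ range (m+1), ∑ s ∈ range (m+1),
        ((r+s).choose r * (2*m-(r+s)).choose (m-r))^2 := by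
  unfold Hs
  rw [Finset.sum_comm]
  apply Finset.sum_congr rfl
  intro r hr
  have hrm : r ≤ m := by simpa [Nat.lt_succ_iff] using hr
  have hterm : ∀ k ∈ range (2*m+1),
      (k.choose r)^2 * ((2*m-k).choose (m-r) * (2*m-k).choose (m+0-r))
      = (k.choose r * (2*m-k).choose (m-r))^2 := by
    intro k _
    rw [show m+0-r = m-r by omega]
    ring
  rw [Finset.sum_congr rfl hterm]
  have hR : ∑ s ∈ range (m+1), ((r+s).choose r * (2*m-(r+s)).choose (m-r))^2
      = ∑ k ∈ Ico r (r+(m+1)), (k.choose r * (2*m-k).choose (m-r))^2 := by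
    rw [Finset.sum_Ico_eq_sum_range, show r+(m+1)-r = m+1 by omega]
  rw [hR, Finset.range_eq_Ico,
      ← Finset.sum_Ico_consecutive (fun k => (k.choose r * (2*m-k).choose (m-r))^2)
        (show 0 ≤ r by omega) (show r ≤ 2*m+1 by omega),
      ← Finset.sum_Ico_consecutive (fun k => (k.choose r * (2*m-k).choose (m-r))^2)
        (show r ≤ r+(m+1) by omega) (show r+(m+1) ≤ 2*m+1 by omega)]
  have z1 : ∑ k ∈ Ico 0 r, (k.choose r * (2*m-k).choose (m-r))^2 = 0 := by
    apply Finset.sum_eq_zero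
    intro k hk
    rw [Nat.choose_eq_zero_of_lt (Finset.mem_Ico.mp hk).2]
    ring
  have z2 : ∑ k ∈ Ico (r+(m+1)) (2*m+1), (k.choose r * (2*m-k).choose (m-r))^2 = 0 := by
    apply Finset.sum_eq_zero
    intro k hk
    have h1 : r+(m+1) ≤ k := (Finset.mem_Ico.mp hk).1
    have h2 : k < 2*m+1 := (Finset.mem_Ico.mp hk).2
    rw [Nat.choose_eq_zero_of_lt (show 2*m-k < m-r by omega)]
    ring
  rw [z1, z2]
  omega

lemma TsEval (m : ℕ) : Ts 0 (2*m) m = (4*m+1).choose (2*m) := by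
  have hS : Ts 0 (2*m) m = ∑ j ∈ range (m+1), (2*m+1).choose j * (2*m+1).choose j := by
    unfold Ts
    apply Finset.sum_congr rfl
    intro j hj
    have hjm : j ≤ m := by simpa [Nat.lt_succ_iff] using hj
    rw [show 2*m+0+1-j = 2*m+1-j by omega,
        Nat.choose_symm (show j ≤ 2*m+1 by omega)]
  have hvdm : (4*m+2).choose (2*m+1)
      = ∑ j ∈ range (2*m+2), (2*m+1).choose j * (2*m+1).choose (2*m+1-j) := by
    rw [show 4*m+2 = (2*m+1)+(2*m+1) by ring, Nat.add_choose_eq,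
        Finset.Nat.sum_antidiagonal_eq_sum_range_succ_mk]
  have hsplit : ∑ j ∈ range (2*m+2), (2*m+1).choose j * (2*m+1).choose (2*m+1-j)
      = (∑ j ∈ Ico 0 (m+1), (2*m+1).choose j * (2*m+1).choose (2*m+1-j))
      + ∑ j ∈ Ico (m+1) (2*m+2), (2*m+1).choose j * (2*m+1).choose (2*m+1-j) := by
    rw [Finset.range_eq_Ico,
        ← Finset.sum_Ico_consecutive (fun j => (2*m+1).choose j * (2*m+1).choose (2*m+1-j))
          (show 0 ≤ m+1 by omega) (show m+1 ≤ 2*m+2 by omega)]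
  have h1 : ∑ j ∈ Ico 0 (m+1), (2*m+1).choose j * (2*m+1).choose (2*m+1-j)
      = ∑ j ∈ range (m+1), (2*m+1).choose j * (2*m+1).choose j := by
    rw [← Finset.range_eq_Ico]
    apply Finset.sum_congr rfl
    intro j hj
    have hjm : j ≤ m := by simpa [Nat.lt_succ_iff] using hj
    rw [Nat.choose_symm (show j ≤ 2*m+1 by omega)]
  have h2 : ∑ j ∈ Ico (m+1) (2*m+2), (2*m+1).choose j * (2*m+1).choose (2*m+1-j)
      = ∑ j ∈ range (m+1), (2*m+1).choose j * (2*m+1).choose j := by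
    rw [Finset.sum_Ico_eq_sum_range, show 2*m+2-(m+1) = m+1 by omega]
    rw [← Finset.sum_range_reflect]
    apply Finset.sum_congr rfl
    intro j hj
    have hjm : j ≤ m := by simpa [Nat.lt_succ_iff] using hj
    rw [show m+1+(m+1-1-j) = 2*m+1-j by omega, show 2*m+1-(2*m+1-j) = j by omega,
        Nat.choose_symm (show j ≤ 2*m+1 by omega)]
  have hpas : (4*m+2).choose (2*m+1) = 2 * ((4*m+1).choose (2*m)) := by
    rw [show 4*m+2 = (4*m+1)+1 by ring, show 2*m+1 = (2*m)+1 by ring,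
        Nat.choose_succ_succ' (4*m+1) (2*m)]
    have : (4*m+1).choose (2*m+1) = (4*m+1).choose (2*m) := by
      rw [← Nat.choose_symm (show 2*m+1 ≤ 4*m+1 by omega), show 4*m+1-(2*m+1) = 2*m by omega]
    omega
  omega

/-- The key natural-number identity:
`∑_{r,s ≤ m} (C(r+s,r) C(2m-r-s, m-r))² = C(4m+1, 2m)`. -/
lemma natId (m : ℕ) :
    ∑ r ∈ range (m+1), ∑ s ∈ range (m+1),
      ((r+s).choose r * (2*m-(r+s)).choose (m-r))^2 = (4*m+1).choose (2*m) := by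
  rw [← HsEval, Hs_eq_Ts, TsEval]

lemma chain (n a b : ℕ) : n.choose (a+b) * (a+b).choose a = n.choose a * (n-a).choose b := by
  rcases le_or_gt (a+b) n with h | h
  · have hmul := Nat.choose_mul (n := n) (Nat.le_add_right a b)
    rw [show a+b-a = b by omega] at hmul
    exact hmul
  · rcases le_or_gt a n with h2 | h2
    · rw [Nat.choose_eq_zero_of_lt h, Nat.choose_eq_zero_of_lt (show n-a < b by omega)]
      ring
    · rw [Nat.choose_eq_zero_of_lt (show n < a+b by omega), Nat.choose_eq_zero_of_lt h2]
      ring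

lemma prodId (m r s : ℕ) (hr : r ≤ m) (hs : s ≤ m) :
    (2*m).choose (r+s) * ((r+s).choose r * (2*m-(r+s)).choose (m-r))
      = m.choose r * m.choose s * (2*m).choose m := by
  have h1 : (r+s).choose r = (r+s).choose s := by
    rw [← Nat.choose_symm (show r ≤ r+s by omega), show r+s-r = s by omega]
  have h2 := chain (2*m) s r
  rw [show s+r = r+s by ring] at h2
  have h3 := chain (2*m-s) r (m-r)
  rw [show r+(m-r) = m by omega, show 2*m-s-r = 2*m-(r+s) by omega] at h3
  have h4 := chain (2*m) s (m-s)
  rw [show s+(m-s) = m by omega] at h4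
  have h5 : (2*m-s).choose (m-s) = (2*m-s).choose m := by
    rw [← Nat.choose_symm (show m ≤ 2*m-s by omega), show 2*m-s-m = m-s by omega]
  calc (2*m).choose (r+s) * ((r+s).choose r * (2*m-(r+s)).choose (m-r))
      = ((2*m).choose (r+s) * (r+s).choose s) * (2*m-(r+s)).choose (m-r) := by rw [h1]; ring
    _ = (2*m).choose s * ((2*m-s).choose r * (2*m-(r+s)).choose (m-r)) := by rw [h2]; ring
    _ = (2*m).choose s * ((2*m-s).choose m * m.choose r) := by rw [h3]
    _ = ((2*m).choose s * (2*m-s).choose (m-s)) * m.choose r := by rw [h5]; ring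
    _ = ((2*m).choose m * m.choose s) * m.choose r := by rw [← h4]
    _ = m.choose r * m.choose s * (2*m).choose m := by ring

theorem stmt_6 (m : ℕ) (hm : 1 ≤ m) :
    ∑ r ∈ Finset.range (m + 1), ∑ s ∈ Finset.range (m + 1),
      ((m.choose r * m.choose s : ℚ) / ((2 * m).choose (r + s) : ℚ)) ^ 2
      = ((4 * m + 1).choose (2 * m) : ℚ) / ((2 * m).choose m : ℚ) ^ 2 := by
  have hcm : (((2*m).choose m : ℚ)) ≠ 0 := by
    exact_mod_cast (Nat.choose_pos (show m ≤ 2*m by omega)).ne'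
  have key : ∀ r ∈ range (m+1), ∀ s ∈ range (m+1),
      ((m.choose r * m.choose s : ℚ) / ((2 * m).choose (r + s) : ℚ)) ^ 2
      = ((((r+s).choose r * (2*m-(r+s)).choose (m-r) : ℕ) : ℚ))^2 / ((2*m).choose m : ℚ)^2 := by
    intro r hr s hs
    have hrm : r ≤ m := by simpa [Nat.lt_succ_iff] using hr
    have hsm : s ≤ m := by simpa [Nat.lt_succ_iff] using hs
    have hden : (((2*m).choose (r+s) : ℚ)) ≠ 0 := by
      exact_mod_cast (Nat.choose_pos (show r+s ≤ 2*m by omega)).ne'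
    have hq : (((2*m).choose (r+s) : ℚ)) * ((((r+s).choose r : ℕ):ℚ) * (((2*m-(r+s)).choose (m-r) : ℕ):ℚ))
        = ((m.choose r : ℕ):ℚ) * ((m.choose s : ℕ):ℚ) * (((2*m).choose m : ℕ):ℚ) := by
      exact_mod_cast congrArg (Nat.cast : ℕ → ℚ) (prodId m r s hrm hsm)
    rw [div_pow, div_eq_div_iff (pow_ne_zero 2 hden) (pow_ne_zero 2 hcm)]
    push_cast
    linear_combination (-(((m.choose r : ℕ):ℚ) * ((m.choose s : ℕ):ℚ) * (((2*m).choose m : ℕ):ℚ)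
      + (((2*m).choose (r+s) : ℚ)) * ((((r+s).choose r : ℕ):ℚ) * (((2*m-(r+s)).choose (m-r) : ℕ):ℚ)))) * hq
  rw [Finset.sum_congr rfl (fun r hr => Finset.sum_congr rfl (key r hr))]
  have hnum : (∑ r ∈ range (m+1), ∑ s ∈ range (m+1),
      ((((r+s).choose r * (2*m-(r+s)).choose (m-r) : ℕ) : ℚ))^2)
      = (((4*m+1).choose (2*m) : ℕ) : ℚ) := by
    exact_mod_cast congrArg (Nat.cast : ℕ → ℚ) (natId m)
  simp only [← Finset.sum_div]
  rw [hnum]
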